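/- (Alzer's inequality, lower bound form) If X is Gamma distributed with integer shape N ≥ 1 and scale 1, then for all y ≥ 0, (1 - exp(-κ y))^N ≤ P(X ≤ y), where κ = (N!)^{-1/N}. -/

import Mathlib

open Real MeasureTheory Set

noncomputable def azk (n : ℕ) : ℝ := (Nat.factorial n : ℝ) ^ (-(1:ℝ)/n)

noncomputable def azf (n : ℕ) (x : ℝ) : ℝ :=
  Real.exp (-x) * x ^ (n-1 : ℕ) / (Nat.factorial (n-1))

noncomputable def azF (n : ℕ) (y : ℝ) : ℝ := ∫ x in (0:ℝ)..y, azf n x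

noncomputable def azG (n : ℕ) (y : ℝ) : ℝ := (1 - Real.exp (-(azk n * y)))^n

noncomputable def azg (n : ℕ) (y : ℝ) : ℝ :=
  (n : ℝ) * (1 - Real.exp (-(azk n * y)))^(n-1 : ℕ) * (azk n * Real.exp (-(azk n * y)))

noncomputable def azP (n : ℕ) (y : ℝ) : ℝ :=
  ((n : ℝ) - 1) * Real.log (azk n * y / (1 - Real.exp (-(azk n * y)))) + (azk n - 1) * y

lemma azk_pos (n : ℕ) : 0 < azk n := by
  apply Real.rpow_pos_of_pos
  exact_mod_cast n.factorial_pos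

lemma azk_pow (n : ℕ) (hn : 1 ≤ n) : (azk n)^n = ((Nat.factorial n : ℝ))⁻¹ := by
  rw [azk, ← Real.rpow_natCast (_ ^ _), ← Real.rpow_mul (by positivity)]
  rw [div_mul_cancel₀ _ (by exact_mod_cast hn.trans_lt' Nat.zero_lt_one |>.ne' : (n:ℝ) ≠ 0), Real.rpow_neg_one]

lemma azf_cont (n : ℕ) : Continuous (azf n) := by
  unfold azf
  fun_prop

lemma hasDerivAt_azF (n : ℕ) (y : ℝ) : HasDerivAt (azF n) (azf n y) y := by
  refine intervalIntegral.integral_hasDerivAt_right ((azf_cont n).intervalIntegrable _ _)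
    ((azf_cont n).stronglyMeasurableAtFilter _ _) (azf_cont n).continuousAt

lemma hasDerivAt_azG (n : ℕ) (y : ℝ) : HasDerivAt (azG n) (azg n y) y := by
  have h1 : HasDerivAt (fun y : ℝ => 1 - Real.exp (-(azk n * y)))
      (azk n * Real.exp (-(azk n * y))) y := by
    have := ((hasDerivAt_id y).const_mul (azk n)).neg.exp
    simpa [mul_comm] using (this.const_sub 1)
  unfold azG
  simpa [azg, mul_assoc] using h1.fun_pow n

lemma core_ineq : ∀ t : ℝ, 0 ≤ t → t * Real.exp (-(t/2)) ≤ 1 - Real.exp (-t) := by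
  have hq : ∀ t : ℝ, HasDerivAt (fun t : ℝ => 1 - Real.exp (-t) - t * Real.exp (-(t/2)))
      (Real.exp (-(t/2)) * (Real.exp (-(t/2)) - 1 + t/2)) t := by
    intro t
    have h1 : HasDerivAt (fun t : ℝ => 1 - Real.exp (-t)) (Real.exp (-t)) t := by
      simpa using ((hasDerivAt_id t).neg.exp.const_sub 1)
    have h2 : HasDerivAt (fun t : ℝ => Real.exp (-(t/2))) (Real.exp (-(t/2)) * -(1/2)) t := by
      have := (((hasDerivAt_id t).div_const 2).neg).exp
      simpa using this
    have h3 := (hasDerivAt_id t).fun_mul h2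
    have h4 := h1.fun_sub h3
    refine h4.congr_deriv ?_
    have h5 := Real.exp_add (-(t/2)) (-(t/2))
    rw [show -(t/2) + -(t/2) = -t by ring] at h5
    rw [h5]; simp only [id_eq]; ring
  have hmono : Monotone (fun t : ℝ => 1 - Real.exp (-t) - t * Real.exp (-(t/2))) := by
    apply monotone_of_deriv_nonneg (fun t => (hq t).differentiableAt)
    intro t
    rw [(hq t).deriv]
    have h4 : (0:ℝ) ≤ Real.exp (-(t/2)) - 1 + t/2 := by
      have := Real.add_one_le_exp (-(t/2)); linarith
    positivity
  intro t ht
  have h6 := hmono ht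
  simp only [neg_zero, Real.exp_zero, zero_div, zero_mul] at h6
  linarith

lemma az_eqOn (n : ℕ) (hn : 1 ≤ n) : ∀ x ∈ Ioi (0:ℝ),
    Real.exp (-x) * x ^ ((n:ℝ) - 1) = Real.exp (-x) * x ^ (n-1 : ℕ) := by
  intro x hx
  rw [show (n:ℝ) - 1 = ((n-1 : ℕ) : ℝ) by
    rw [Nat.cast_sub hn]; norm_num, Real.rpow_natCast]

lemma tendsto_azF (n : ℕ) (hn : 1 ≤ n) : Filter.Tendsto (azF n) Filter.atTop (nhds 1) := by
  have hpos : (0:ℝ) < (n:ℝ) := by exact_mod_cast hn.trans_lt' Nat.zero_lt_one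
  have hint0 := Real.GammaIntegral_convergent hpos
  have hint : IntegrableOn (azf n) (Ioi 0) := by
    have h0 : IntegrableOn (fun x : ℝ => Real.exp (-x) * x ^ ((n:ℝ)-1) / (Nat.factorial (n-1)))
        (Ioi 0) := hint0.div_const _
    apply h0.congr_fun _ measurableSet_Ioi
    intro x hx
    unfold azf
    simp only
    rw [az_eqOn n hn x hx]
  have key := MeasureTheory.intervalIntegral_tendsto_integral_Ioi 0 hint Filter.tendsto_id
  have hval : ∫ x in Ioi (0:ℝ), azf n x = 1 := by
    unfold azf
    have h1 : ∫ x in Ioi (0:ℝ), Real.exp (-x) * x ^ (n-1 : ℕ) / (Nat.factorial (n-1))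
        = (∫ x in Ioi (0:ℝ), Real.exp (-x) * x ^ (n-1 : ℕ)) / (Nat.factorial (n-1)) := by
      rw [integral_div]
    rw [h1]
    have h2 : ∫ x in Ioi (0:ℝ), Real.exp (-x) * x ^ (n-1 : ℕ)
        = ∫ x in Ioi (0:ℝ), Real.exp (-x) * x ^ ((n:ℝ) - 1) := by
      apply MeasureTheory.setIntegral_congr_fun measurableSet_Ioi
      intro x hx
      exact (az_eqOn n hn x hx).symm
    rw [h2, ← Real.Gamma_eq_integral hpos]
    have h3 : Real.Gamma n = (Nat.factorial (n-1) : ℝ) := by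
      have := Real.Gamma_nat_eq_factorial (n-1)
      rw [show (((n-1 : ℕ):ℝ) + 1) = (n:ℝ) by rw [Nat.cast_sub hn]; ring] at this
      exact this
    rw [h3, div_self]
    exact_mod_cast (Nat.factorial_pos (n-1)).ne'
  rw [← hval]
  exact key

lemma tendsto_azG (n : ℕ) : Filter.Tendsto (azG n) Filter.atTop (nhds 1) := by
  have h : Filter.Tendsto (fun y : ℝ => Real.exp (-(azk n * y))) Filter.atTop (nhds 0) := by
    apply Real.tendsto_exp_atBot.comp
    have := Filter.Tendsto.const_mul_atTop (azk_pos n) (Filter.tendsto_id (α := ℝ))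
    exact (Filter.tendsto_neg_atTop_atBot.comp this).congr (fun x => rfl)
  have : Filter.Tendsto (fun y : ℝ => (1 - Real.exp (-(azk n * y)))^n) Filter.atTop
      (nhds ((1 - 0 : ℝ)^n)) := ((tendsto_const_nhds.sub h).pow n)
  unfold azG
  simpa using this

lemma one_sub_exp_pos (n : ℕ) {y : ℝ} (hy : 0 < y) : 0 < 1 - Real.exp (-(azk n * y)) := by
  have h1 : -(azk n * y) < 0 := by
    have := mul_pos (azk_pos n) hy; linarith
  have := Real.exp_lt_one_iff.mpr h1
  linarith

noncomputable def azP' (n : ℕ) (y : ℝ) : ℝ :=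
  ((n : ℝ) - 1) * (1/y - azk n * Real.exp (-(azk n * y)) / (1 - Real.exp (-(azk n * y))))
    + (azk n - 1)

noncomputable def azP'' (n : ℕ) (y : ℝ) : ℝ :=
  ((n : ℝ) - 1) * (-(1/y^2)
    + (azk n)^2 * Real.exp (-(azk n * y)) / (1 - Real.exp (-(azk n * y)))^2)

lemma hasDerivAt_inner (n : ℕ) (y : ℝ) :
    HasDerivAt (fun y : ℝ => 1 - Real.exp (-(azk n * y))) (azk n * Real.exp (-(azk n * y))) y := by
  have := ((hasDerivAt_id y).const_mul (azk n)).neg.exp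
  simpa [mul_comm] using (this.const_sub 1)

lemma hasDerivAt_azP (n : ℕ) {y : ℝ} (hy : 0 < y) : HasDerivAt (azP n) (azP' n y) y := by
  set k := azk n with hk
  have hkpos := azk_pos n
  have hE := one_sub_exp_pos n hy
  have heq : (fun y : ℝ => ((n : ℝ) - 1) * (Real.log (k * y) - Real.log (1 - Real.exp (-(k * y))))
      + (k - 1) * y) =ᶠ[nhds y] azP n := by
    filter_upwards [eventually_gt_nhds hy] with t ht
    have hEt := one_sub_exp_pos n ht
    unfold azP
    rw [Real.log_div (by positivity) (ne_of_gt hEt)]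
  apply HasDerivAt.congr_of_eventuallyEq _ heq.symm
  have h1 : HasDerivAt (fun y : ℝ => Real.log (k * y)) (1/y) y := by
    have h0 : HasDerivAt (fun y : ℝ => k * y) (k * 1) y := (hasDerivAt_id y).const_mul k
    have := h0.log (by positivity)
    convert this using 1
    field_simp
    exact (div_self (ne_of_gt hkpos)).symm
  have h2 : HasDerivAt (fun y : ℝ => Real.log (1 - Real.exp (-(k * y))))
      (k * Real.exp (-(k * y)) / (1 - Real.exp (-(k * y)))) y :=
    (hasDerivAt_inner n y).log (ne_of_gt hE)
  have h3 := ((h1.fun_sub h2).const_mul ((n : ℝ) - 1)).fun_add ((hasDerivAt_id y).const_mul (k - 1))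
  unfold azP'
  refine h3.congr_deriv ?_
  rw [← hk]
  ring

lemma hasDerivAt_azP' (n : ℕ) {y : ℝ} (hy : 0 < y) : HasDerivAt (azP' n) (azP'' n y) y := by
  set k := azk n with hk
  have hkpos := azk_pos n
  have hE := one_sub_exp_pos n hy
  have h1 : HasDerivAt (fun y : ℝ => 1/y) (-(1/y^2)) y := by
    have := (hasDerivAt_inv (ne_of_gt hy))
    simpa [one_div] using this
  have hnum : HasDerivAt (fun y : ℝ => k * Real.exp (-(k * y)))
      (-(k^2 * Real.exp (-(k * y)))) y := by
    have := (((hasDerivAt_id y).const_mul k).neg.exp).const_mul k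
    refine this.congr_deriv ?_
    simp; ring
  have h2 : HasDerivAt (fun y : ℝ => k * Real.exp (-(k * y)) / (1 - Real.exp (-(k * y))))
      (-(k^2 * Real.exp (-(k * y))) / (1 - Real.exp (-(k * y)))^2) y := by
    have := hnum.fun_div (hasDerivAt_inner n y) (ne_of_gt hE)
    rw [← hk] at this hE
    refine this.congr_deriv ?_
    field_simp
    ring
  have h3 := ((h1.fun_sub h2).const_mul ((n : ℝ) - 1)).add_const (k - 1)
  unfold azP' azP''
  refine h3.congr_deriv ?_
  rw [← hk]
  ring

lemma azP''_nonpos (n : ℕ) (hn : 1 ≤ n) {y : ℝ} (hy : 0 < y) : azP'' n y ≤ 0 := by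
  set k := azk n with hk
  have hkpos := azk_pos n
  have hE := one_sub_exp_pos n hy
  have ht : 0 < k * y := mul_pos hkpos hy
  have hcore := core_ineq (k * y) ht.le
  have hsq : (k*y)^2 * Real.exp (-(k*y)) ≤ (1 - Real.exp (-(k*y)))^2 := by
    have hl : 0 ≤ (k*y) * Real.exp (-((k*y)/2)) := by positivity
    have h7 : Real.exp (-((k*y)/2)) * Real.exp (-((k*y)/2)) = Real.exp (-(k*y)) := by
      rw [← Real.exp_add]; ring_nf
    nlinarith [mul_self_le_mul_self hl hcore]
  have hfrac : k^2 * Real.exp (-(k*y)) / (1 - Real.exp (-(k*y)))^2 ≤ 1/y^2 := by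
    rw [div_le_div_iff₀ (by positivity) (by positivity)]
    nlinarith [hsq]
  have hcoef : (0:ℝ) ≤ (n : ℝ) - 1 := by
    have : (1:ℝ) ≤ (n:ℝ) := by exact_mod_cast hn
    linarith
  unfold azP''
  rw [← hk]
  have : -(1/y^2) + k^2 * Real.exp (-(k*y)) / (1 - Real.exp (-(k*y)))^2 ≤ 0 := by linarith
  exact mul_nonpos_of_nonneg_of_nonpos hcoef this

lemma azP_cont_zero (n : ℕ) : ContinuousWithinAt (azP n) (Ici 0) 0 := by
  have hkpos := azk_pos n
  have h0 : azP n 0 = 0 := by simp [azP]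
  unfold ContinuousWithinAt
  rw [h0]
  have hlin : Filter.Tendsto (fun y : ℝ => (azk n - 1) * y) (nhdsWithin 0 (Ici 0)) (nhds 0) := by
    have h : Filter.Tendsto (fun y : ℝ => (azk n - 1) * y) (nhds 0) (nhds ((azk n - 1) * 0)) :=
      (continuous_const.mul continuous_id).tendsto 0
    simpa using h.mono_left nhdsWithin_le_nhds
  have hlog : Filter.Tendsto (fun y : ℝ => Real.log (azk n * y / (1 - Real.exp (-(azk n * y)))))
      (nhdsWithin 0 (Ici 0)) (nhds 0) := by
    have hset : (Ici (0:ℝ)) = {0} ∪ Ioi 0 := by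
      rw [Set.union_comm, ← Set.Ioi_insert]; simp
    rw [hset, nhdsWithin_union, Filter.tendsto_sup]
    constructor
    · rw [nhdsWithin_singleton]
      have := tendsto_pure_nhds
        (fun y : ℝ => Real.log (azk n * y / (1 - Real.exp (-(azk n * y))))) 0
      simpa using this
    · have hd : HasDerivAt (fun t : ℝ => 1 - Real.exp (-t)) 1 0 := by
        have : HasDerivAt (fun t : ℝ => 1 - Real.exp (-t)) (Real.exp (-(0:ℝ))) 0 := by
          simpa using ((hasDerivAt_id (0:ℝ)).neg.exp.const_sub 1)
        simpa using this
      have hslope := hasDerivAt_iff_tendsto_slope.mp hd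
      have hcompmap : Filter.Tendsto (fun y : ℝ => azk n * y) (nhdsWithin 0 (Ioi 0))
          (nhdsWithin 0 {(0:ℝ)}ᶜ) := by
        apply tendsto_nhdsWithin_of_tendsto_nhds_of_eventually_within
        · have h : Filter.Tendsto (fun y : ℝ => azk n * y) (nhds 0) (nhds (azk n * 0)) :=
            (continuous_const.mul continuous_id).tendsto 0
          simpa using h.mono_left nhdsWithin_le_nhds
        · filter_upwards [self_mem_nhdsWithin] with y hy
          exact (mul_pos hkpos hy).ne'
      have hw : Filter.Tendsto (fun y : ℝ => (1 - Real.exp (-(azk n * y))) / (azk n * y))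
          (nhdsWithin 0 (Ioi 0)) (nhds 1) := by
        have hc := hslope.comp hcompmap
        apply hc.congr'
        filter_upwards [self_mem_nhdsWithin] with y _
        simp [Function.comp, slope_def_field]
      have hu : Filter.Tendsto (fun y : ℝ => azk n * y / (1 - Real.exp (-(azk n * y))))
          (nhdsWithin 0 (Ioi 0)) (nhds 1) := by
        have hinv := hw.inv₀ one_ne_zero
        rw [inv_one] at hinv
        apply hinv.congr'
        filter_upwards [self_mem_nhdsWithin] with y _
        rw [inv_div]
      have hl := (Real.continuousAt_log one_ne_zero).tendsto.comp hu
      rw [Real.log_one] at hl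
      exact hl
  have := (hlog.const_mul ((n:ℝ) - 1)).add hlin
  unfold azP
  simpa using this

lemma azP_concave (n : ℕ) (hn : 1 ≤ n) : ConcaveOn ℝ (Ici 0) (azP n) := by
  apply concaveOn_of_hasDerivWithinAt2_nonpos (convex_Ici 0) (f' := azP' n) (f'' := azP'' n)
  · intro x hx
    rcases eq_or_lt_of_le hx.out with h|h
    · rw [← h] at *; exact azP_cont_zero n
    · exact ((hasDerivAt_azP n h).continuousAt).continuousWithinAt
  · intro x hx
    rw [interior_Ici] at hx
    exact (hasDerivAt_azP n hx).hasDerivWithinAt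
  · intro x hx
    rw [interior_Ici] at hx
    exact (hasDerivAt_azP' n hx).hasDerivWithinAt
  · intro x hx
    rw [interior_Ici] at hx
    exact azP''_nonpos n hn hx

lemma azP_zero (n : ℕ) : azP n 0 = 0 := by
  simp [azP]

lemma azfg_ident (n : ℕ) (hn : 1 ≤ n) (y : ℝ) (hy : 0 < y) :
    azf n y = azg n y * Real.exp (azP n y) := by
  have hkpos := azk_pos n
  have hE := one_sub_exp_pos n hy
  have hu : 0 < azk n * y / (1 - Real.exp (-(azk n * y))) := by positivity
  have hcast : ((n:ℝ) - 1) = ((n-1:ℕ):ℝ) := by rw [Nat.cast_sub hn]; norm_num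
  have hexp : Real.exp (azP n y)
      = (azk n * y / (1 - Real.exp (-(azk n * y))))^(n-1:ℕ) * Real.exp ((azk n - 1)*y) := by
    unfold azP
    rw [Real.exp_add, hcast, Real.exp_nat_mul, Real.exp_log hu]
  have hme : Real.exp (-(azk n * y)) * Real.exp ((azk n - 1)*y) = Real.exp (-y) := by
    rw [← Real.exp_add]; ring_nf
  have hkn : azk n * (azk n)^(n-1:ℕ) = ((n.factorial : ℝ))⁻¹ := by
    rw [← pow_succ', Nat.sub_add_cancel hn, azk_pow n hn]
  have hnsp : n - 1 + 1 = n := Nat.sub_add_cancel hn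
  have hfacn : (n.factorial : ℝ) = (n:ℝ) * (Nat.factorial (n-1) : ℝ) := by
    conv_lhs => rw [← hnsp]
    rw [Nat.factorial_succ, hnsp]
    push_cast
    ring
  have hne : ((1 : ℝ) - Real.exp (-(azk n * y))) ^ (n-1:ℕ) ≠ 0 := pow_ne_zero _ (ne_of_gt hE)
  unfold azf azg
  rw [hexp]
  have hstep : (n:ℝ) * (1 - Real.exp (-(azk n * y)))^(n-1:ℕ)
        * (azk n * Real.exp (-(azk n * y))) *
      ((azk n * y / (1 - Real.exp (-(azk n * y))))^(n-1:ℕ) * Real.exp ((azk n - 1)*y))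
      = (n:ℝ) * (azk n * (azk n)^(n-1:ℕ))
        * (Real.exp (-(azk n * y)) * Real.exp ((azk n - 1)*y)) * y^(n-1:ℕ)
        * ((1 - Real.exp (-(azk n * y)))^(n-1:ℕ) / (1 - Real.exp (-(azk n * y)))^(n-1:ℕ)) := by
    rw [div_pow, mul_pow]
    ring
  rw [hstep, div_self hne, mul_one, hme, hkn, hfacn]
  have hn0 : ((n:ℝ)) ≠ 0 := by positivity
  have hf0 : ((Nat.factorial (n-1) : ℝ)) ≠ 0 := by positivity
  field_simp

theorem alzer_inequality (N : ℕ) (hN : 1 ≤ N) (y : ℝ) (hy : 0 ≤ y) :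
    (1 - Real.exp (-(((Nat.factorial N : ℝ) ^ (-(1 : ℝ) / N)) * y))) ^ N
      ≤ ∫ x in Ioc (0 : ℝ) y, Real.exp (-x) * x ^ (N - 1 : ℕ) / Nat.factorial (N - 1) := by
  have hrhs : (∫ x in Ioc (0:ℝ) y, Real.exp (-x) * x ^ (N-1:ℕ) / Nat.factorial (N-1))
      = azF N y := by
    rw [azF, intervalIntegral.integral_of_le hy]
    rfl
  rw [hrhs]
  show azG N y ≤ azF N y
  set H : ℝ → ℝ := fun t => azF N t - azG N t with hHdef
  have hH : ∀ t, HasDerivAt H (azf N t - azg N t) t :=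
    fun t => (hasDerivAt_azF N t).sub (hasDerivAt_azG N t)
  have hHd : ∀ t, deriv H t = azf N t - azg N t := fun t => (hH t).deriv
  have hHc : Continuous H := by
    have hd : Differentiable ℝ H := fun t => (hH t).differentiableAt
    exact hd.continuous
  have hF0 : azF N 0 = 0 := intervalIntegral.integral_same
  have hG0 : azG N 0 = 0 := by
    simp [azG, zero_pow (by omega : N ≠ 0)]
  have hgnn : ∀ t : ℝ, 0 < t → 0 ≤ azg N t := by
    intro t ht
    have h1 := one_sub_exp_pos N ht
    have h2 := azk_pos N
    unfold azg
    positivity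
  rcases eq_or_lt_of_le hy with h|hy'
  · rw [← h, hF0, hG0]
  have hsuff : 0 ≤ H y := by
    by_cases hA : ∀ t ∈ Ioo (0:ℝ) y, 0 ≤ azP N t
    · have hmono : MonotoneOn H (Icc 0 y) := by
        apply monotoneOn_of_deriv_nonneg (convex_Icc 0 y) hHc.continuousOn
          (fun t _ => ((hH t).differentiableAt).differentiableWithinAt)
        intro t ht
        rw [interior_Icc] at ht
        rw [hHd]
        have hgt := hgnn t ht.1
        have hid := azfg_ident N hN t ht.1
        have hex : (1:ℝ) ≤ Real.exp (azP N t) := Real.one_le_exp (hA t ht)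
        nlinarith
      have h01 := hmono (left_mem_Icc.mpr hy) (right_mem_Icc.mpr hy) hy
      have hzero : H 0 = 0 := by rw [hHdef]; simp [hF0, hG0]
      linarith
    · push_neg at hA
      obtain ⟨a, ha, hPa⟩ := hA
      have hconc := azP_concave N hN
      have hP0 : azP N 0 = 0 := azP_zero N
      have hneg : ∀ t, y ≤ t → azP N t < 0 := by
        intro t hyt
        have hat : a < t := lt_of_lt_of_le ha.2 hyt
        have hapos : 0 < a := ha.1
        have htpos : 0 < t := lt_trans hapos hat
        have hb : (0:ℝ) ≤ a/t := by positivity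
        have ha' : (0:ℝ) ≤ 1 - a/t := by
          rw [sub_nonneg]
          exact (div_le_one htpos).mpr hat.le
        have hsum : (1 - a/t) + a/t = 1 := by ring
        have hcomb := hconc.2 (mem_Ici.mpr le_rfl) (mem_Ici.mpr htpos.le) ha' hb hsum
        rw [smul_eq_mul, smul_eq_mul, smul_eq_mul, smul_eq_mul] at hcomb
        have harg : (1 - a/t) * 0 + (a/t) * t = a := by field_simp; ring
        rw [harg, hP0] at hcomb
        have hdiv : 0 < a/t := div_pos hapos htpos
        nlinarith
      have hanti : AntitoneOn H (Ici y) := by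
        apply antitoneOn_of_deriv_nonpos (convex_Ici y) hHc.continuousOn
          (fun t _ => ((hH t).differentiableAt).differentiableWithinAt)
        intro t ht
        rw [interior_Ici] at ht
        rw [hHd]
        have htpos : 0 < t := lt_trans hy' ht
        have hid := azfg_ident N hN t htpos
        have hex : Real.exp (azP N t) ≤ 1 := Real.exp_le_one_iff.mpr (hneg t ht.le).le
        nlinarith [hgnn t htpos]
      have hev : ∀ᶠ t in Filter.atTop, H t ≤ H y := by
        filter_upwards [Filter.eventually_ge_atTop y] with t ht
        exact hanti (mem_Ici.mpr le_rfl) (mem_Ici.mpr ht) ht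
      have htend : Filter.Tendsto H Filter.atTop (nhds 0) := by
        have := (tendsto_azF N hN).sub (tendsto_azG N)
        simpa using this
      exact le_of_tendsto htend hev
  have : H y = azF N y - azG N y := rfl
  linarith
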